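/- For all integers d ≥ 10 and n satisfying n ≥ 2d and n ≥ d + 32, the inequality (n-d)^{log₂((d-1)/2)} + 2·(⌊n/2⌋ - d)^{log₂(d/2)} + 2 ≤ (n-d)^{log₂(d/2)} holds. -/

import Mathlib

lemma aux_poly_2_0 (D : ℝ) (hD : 10 ≤ D) :
    (D-1)^(5:ℕ) + 4*D^(4:ℕ) + 64 ≤ D^(5:ℕ) := by
  nlinarith [mul_nonneg (pow_nonneg (by linarith : (0:ℝ) ≤ D) 3) (by linarith : (0:ℝ) ≤ D - 10),
    mul_nonneg (mul_nonneg (by linarith : (0:ℝ) ≤ D) (by linarith : (0:ℝ) ≤ D))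
      (by linarith : (0:ℝ) ≤ D - 10)]

/-- Inductive-step inequality for `(α,β) = (2,0)`: for integers `d ≥ 10`,
`n ≥ 2d`, `n ≥ d + 32`,
`(n-d)^{log₂((d-1)/2)} + 2 (⌊n/2⌋-d)^{log₂(d/2)} + 2 ≤ (n-d)^{log₂(d/2)}`. -/
theorem inductive_step_2_0 (d n : ℕ) (hd : 10 ≤ d) (hn2d : 2 * d ≤ n)
    (hn : d + 32 ≤ n) :
    ((n : ℝ) - d) ^ Real.logb 2 (((d : ℝ) - 1) / 2)
      + 2 * (((n / 2 : ℕ) : ℝ) - d) ^ Real.logb 2 ((d : ℝ) / 2) + 2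
    ≤ ((n : ℝ) - d) ^ Real.logb 2 ((d : ℝ) / 2) := by
  have hd' : (10:ℝ) ≤ (d:ℝ) := by exact_mod_cast hd
  set D : ℝ := (d:ℝ) with hD
  set X : ℝ := (n:ℝ) - D with hX
  have hX32 : (32:ℝ) ≤ X := by
    have : (d:ℝ) + 32 ≤ (n:ℝ) := by exact_mod_cast hn
    simp [hX, hD]; linarith
  have hXpos : 0 < X := by linarith
  set p : ℝ := Real.logb 2 (D / 2) with hp
  set q : ℝ := Real.logb 2 ((D - 1) / 2) with hq
  have h2p : (2:ℝ) ^ p = D / 2 := Real.rpow_logb (by norm_num) (by norm_num) (by linarith)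
  have h2q : (2:ℝ) ^ q = (D - 1) / 2 := Real.rpow_logb (by norm_num) (by norm_num) (by linarith)
  have hppos : 0 ≤ p := by
    rw [hp]
    apply Real.logb_nonneg (by norm_num)
    linarith
  have hqp : q ≤ p :=
    Real.logb_le_logb_of_le (by norm_num) (by linarith) (by linarith)
  -- 32 ^ r = (2 ^ r) ^ 5 for any r
  have key32 : ∀ r : ℝ, (32:ℝ) ^ r = ((2:ℝ) ^ r) ^ (5:ℕ) := by
    intro r
    rw [show (32:ℝ) = (2:ℝ) ^ ((5:ℕ):ℝ) by
      rw [Real.rpow_natCast]; norm_num]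
    rw [← Real.rpow_natCast ((2:ℝ) ^ r) 5, ← Real.rpow_mul (by norm_num),
      ← Real.rpow_mul (by norm_num), mul_comm]
  have hXp32 : (D/2) ^ (5:ℕ) ≤ X ^ p := by
    have := Real.rpow_le_rpow (by norm_num : (0:ℝ) ≤ 32) hX32 hppos
    rwa [key32, h2p] at this
  have hXp0 : 0 ≤ X ^ p := Real.rpow_nonneg (le_of_lt hXpos) p
  -- Lemma A : X ^ q * (D/(D-1))^5 ≤ X ^ p
  have h2pq : (2:ℝ) ^ (p - q) = D / (D - 1) := by
    rw [Real.rpow_sub (by norm_num), h2p, h2q]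
    field_simp
  have hA : X ^ q * (D / (D-1)) ^ (5:ℕ) ≤ X ^ p := by
    have h1 : (32:ℝ) ^ (p - q) ≤ X ^ (p - q) :=
      Real.rpow_le_rpow (by norm_num) hX32 (by linarith)
    rw [key32, h2pq] at h1
    calc X ^ q * (D / (D-1)) ^ (5:ℕ) ≤ X ^ q * X ^ (p - q) := by
          apply mul_le_mul_of_nonneg_left h1 (Real.rpow_nonneg (le_of_lt hXpos) q)
      _ = X ^ p := by rw [← Real.rpow_add hXpos]; ring_nf
  have hA' : X ^ q ≤ ((D-1)/D) ^ (5:ℕ) * X ^ p := by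
    have hDm1 : (0:ℝ) < D - 1 := by linarith
    have hDpos : (0:ℝ) < D := by linarith
    have hprod : ((D-1)/D) ^ (5:ℕ) * (D/(D-1)) ^ (5:ℕ) = 1 := by
      rw [← mul_pow]; field_simp
    calc X ^ q = (X ^ q * (D/(D-1)) ^ (5:ℕ)) * ((D-1)/D) ^ (5:ℕ) := by
          rw [mul_assoc, mul_comm ((D/(D-1))^(5:ℕ)), hprod, mul_one]
      _ ≤ X ^ p * ((D-1)/D) ^ (5:ℕ) := by
          apply mul_le_mul_of_nonneg_right hA (by positivity)
      _ = ((D-1)/D) ^ (5:ℕ) * X ^ p := by ring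
  -- Lemma B : middle term
  set m : ℝ := ((n / 2 : ℕ) : ℝ) - D with hm
  have hmn : 0 ≤ m := by
    have : d ≤ n / 2 := Nat.le_div_iff_mul_le (by norm_num) |>.mpr (by omega)
    have : (d:ℝ) ≤ ((n/2:ℕ):ℝ) := by exact_mod_cast this
    simp [hm, hD]; linarith
  have hmle : m ≤ X / 2 := by
    have h1 : ((n/2:ℕ):ℝ) ≤ (n:ℝ)/2 := by
      have := Nat.cast_div_le (α := ℝ) (m := n) (n := 2)
      simpa using this
    simp only [hm, hX]
    linarith
  have hB : m ^ p ≤ 2 * X ^ p / D := by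
    have h1 : m ^ p ≤ (X/2) ^ p := Real.rpow_le_rpow hmn hmle hppos
    have h2 : (X/2) ^ p = X ^ p / (D/2) := by
      rw [Real.div_rpow (le_of_lt hXpos) (by norm_num), h2p]
    rw [h2] at h1
    calc m ^ p ≤ X ^ p / (D/2) := h1
      _ = 2 * X ^ p / D := by field_simp
  -- Lemma C : 2 ≤ 64 * X^p / D^5
  have hC : (2:ℝ) ≤ 64 * X ^ p / D ^ (5:ℕ) := by
    have hD5 : (0:ℝ) < D ^ (5:ℕ) := by positivity
    rw [le_div_iff₀ hD5]
    have : (D/2) ^ (5:ℕ) = D ^ (5:ℕ) / 32 := by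
      rw [div_pow]; norm_num
    nlinarith [hXp32]
  -- combine
  have hDpos : (0:ℝ) < D := by linarith
  have hpoly : ((D-1)/D) ^ (5:ℕ) * X ^ p + 2 * (2 * X ^ p / D) + 64 * X ^ p / D ^ (5:ℕ) ≤ X ^ p := by
    rw [div_pow]
    have hD5 : (0:ℝ) < D ^ (5:ℕ) := by positivity
    have key : (D-1)^(5:ℕ) + 4 * D^(4:ℕ) + 64 ≤ D ^ (5:ℕ) := by
      have := aux_poly_2_0 D hd'
      linarith
    have e1 : ((D-1)^(5:ℕ) / D^(5:ℕ)) * X ^ p + 2 * (2 * X ^ p / D) + 64 * X ^ p / D ^ (5:ℕ)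
        = (((D-1)^(5:ℕ) + 4 * D^(4:ℕ) + 64) * X ^ p) / D ^ (5:ℕ) := by
      field_simp
      ring
    rw [e1, div_le_iff₀ hD5]
    calc ((D-1)^(5:ℕ) + 4 * D^(4:ℕ) + 64) * X ^ p ≤ D^(5:ℕ) * X ^ p :=
          mul_le_mul_of_nonneg_right key hXp0
      _ = X ^ p * D^(5:ℕ) := by ring
  have hmid : 2 * m ^ p ≤ 2 * (2 * X ^ p / D) := by linarith [hB]
  calc X ^ q + 2 * m ^ p + 2
      ≤ ((D-1)/D) ^ (5:ℕ) * X ^ p + 2 * (2 * X ^ p / D) + 64 * X ^ p / D ^ (5:ℕ) := by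
        linarith [hA', hmid, hC]
    _ ≤ X ^ p := hpoly
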